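/- Assume λ < 1 and 0 < γ < (1−λ)τ/(L+(1+λ)τ)², and set η = sqrt(1 − 2γτ(1−λ) + γ²(L+(1+λ)τ)²). Then for every x ∈ E and every x* ∈ E with G(x*) = 0, one has ‖x − γ·Ĝ(x) − x*‖ ≤ η·‖x − x*‖ + γτσε. -/

import Mathlib

set_option maxHeartbeats 800000

open InnerProductSpace

lemma grad_mono {n : ℕ} (g : EuclideanSpace ℝ (Fin n) → ℝ)
    (g' : EuclideanSpace ℝ (Fin n) → EuclideanSpace ℝ (Fin n))
    (hgconv : ConvexOn ℝ Set.univ g)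
    (hgrad : ∀ x, HasGradientAt g (g' x) x)
    (x y : EuclideanSpace ℝ (Fin n)) :
    (0:ℝ) ≤ ⟪g' x - g' y, x - y⟫_ℝ := by
  set v := x - y with hv
  have hline : ∀ t : ℝ, HasDerivAt (fun s : ℝ => y + s • v) v t := by
    intro t
    simpa using ((hasDerivAt_id t).smul_const v).const_add y
  have hphi : ∀ t : ℝ, HasDerivAt (fun s : ℝ => g (y + s • v)) ⟪g' (y + t • v), v⟫_ℝ t := by
    intro t
    have := ((hgrad (y + t • v)).hasFDerivAt.comp_hasDerivAt t (hline t))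
    simp [InnerProductSpace.toDual_apply_apply] at this
    exact this
  have hconv : ConvexOn ℝ Set.univ (fun s : ℝ => g (y + s • v)) := by
    have haff : ConvexOn ℝ Set.univ (g ∘ (AffineMap.lineMap y x : ℝ →ᵃ[ℝ] EuclideanSpace ℝ (Fin n))) := by
      have := hgconv.comp_affineMap (AffineMap.lineMap y x : ℝ →ᵃ[ℝ] EuclideanSpace ℝ (Fin n))
      simpa using this
    convert haff using 2 with s
    simp [AffineMap.lineMap_apply, hv]
    abel_nf
  have h01 : (0:ℝ) < 1 := one_pos
  have h1 := hconv.le_slope_of_hasDerivAt (Set.mem_univ 0) (Set.mem_univ 1) h01 (hphi 0)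
  have h2 := hconv.slope_le_of_hasDerivAt (Set.mem_univ 0) (Set.mem_univ 1) h01 (hphi 1)
  have : ⟪g' (y + (0:ℝ) • v), v⟫_ℝ ≤ ⟪g' (y + (1:ℝ) • v), v⟫_ℝ := h1.trans h2
  simp only [zero_smul, add_zero, one_smul] at this
  have hyx : y + v = x := by simp [hv]
  rw [hyx] at this
  have := sub_nonneg.2 this
  rwa [← inner_sub_left] at this

/-- One mismatched SD-RED step under a contractive true prior is a contraction
towards any zero of `G` up to an additive error `γτσε`. -/
theorem sdred_one_step_contraction {n : ℕ}
    (g : EuclideanSpace ℝ (Fin n) → ℝ)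
    (g' D Dh G Gh : EuclideanSpace ℝ (Fin n) → EuclideanSpace ℝ (Fin n))
    (L lam σ ε τ γ η : ℝ)
    (hL : 0 < L)
    (hgconv : ConvexOn ℝ Set.univ g)
    (hgrad : ∀ x, HasGradientAt g (g' x) x)
    (hgLip : ∀ x y, ‖g' x - g' y‖ ≤ L * ‖x - y‖)
    (hlam0 : 0 < lam) (hlam1 : lam < 1)
    (hD : ∀ x y, ‖D x - D y‖ ≤ lam * ‖x - y‖)
    (hσ : 0 < σ) (hε : 0 < ε)
    (hmis : ∀ x, ‖Dh x - D x‖ ≤ σ * ε)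
    (hτ : 0 < τ)
    (hG : ∀ x, G x = g' x + τ • (x - D x))
    (hGh : ∀ x, Gh x = g' x + τ • (x - Dh x))
    (hγ0 : 0 < γ) (hγ : γ < (1 - lam) * τ / (L + (1 + lam) * τ) ^ 2)
    (hη : η = Real.sqrt (1 - 2 * γ * τ * (1 - lam) + γ ^ 2 * (L + (1 + lam) * τ) ^ 2)) :
    ∀ x xstar : EuclideanSpace ℝ (Fin n), G xstar = 0 →
      ‖x - γ • Gh x - xstar‖ ≤ η * ‖x - xstar‖ + γ * τ * σ * ε := by
  intro x xstar hstar
  set v := x - xstar with hvdef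
  set K := L + (1 + lam) * τ with hK
  set c := 1 - 2 * γ * τ * (1 - lam) + γ ^ 2 * K ^ 2 with hc
  set u := G x - G xstar with hu
  -- basic positivity
  have hvnn : (0:ℝ) ≤ ‖v‖ := norm_nonneg _
  have hKpos : 0 < K := by nlinarith
  -- inner product lower bound: ⟪u, v⟫ ≥ τ(1-lam)‖v‖²
  have hDx : ‖D x - D xstar‖ ≤ lam * ‖v‖ := hD x xstar
  have hinner : τ * (1 - lam) * ‖v‖ ^ 2 ≤ ⟪u, v⟫_ℝ := by
    have hux : u = (g' x - g' xstar) + τ • (v - (D x - D xstar)) := by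
      rw [hu, hG, hG]
      rw [hvdef]
      module
    have h1 : (0:ℝ) ≤ ⟪g' x - g' xstar, v⟫_ℝ := grad_mono g g' hgconv hgrad x xstar
    have h2 : ⟪D x - D xstar, v⟫_ℝ ≤ lam * ‖v‖ ^ 2 := by
      calc ⟪D x - D xstar, v⟫_ℝ ≤ ‖D x - D xstar‖ * ‖v‖ := real_inner_le_norm _ _
        _ ≤ (lam * ‖v‖) * ‖v‖ := by nlinarith
        _ = lam * ‖v‖ ^ 2 := by ring
    have hvv : ⟪v, v⟫_ℝ = ‖v‖ ^ 2 := real_inner_self_eq_norm_sq v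
    rw [inner_sub_left] at h1
    rw [hux, inner_add_left, real_inner_smul_left, inner_sub_left, inner_sub_left, hvv]
    nlinarith
  -- norm upper bound: ‖u‖ ≤ K ‖v‖
  have hunorm : ‖u‖ ≤ K * ‖v‖ := by
    have hux : u = (g' x - g' xstar) + τ • (v - (D x - D xstar)) := by
      rw [hu, hG, hG, hvdef]; module
    calc ‖u‖ ≤ ‖g' x - g' xstar‖ + ‖τ • (v - (D x - D xstar))‖ := by
          rw [hux]; exact norm_add_le _ _
      _ = ‖g' x - g' xstar‖ + τ * ‖v - (D x - D xstar)‖ := by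
          rw [norm_smul, Real.norm_eq_abs, abs_of_pos hτ]
      _ ≤ L * ‖v‖ + τ * (‖v‖ + lam * ‖v‖) := by
          have h3 : ‖v - (D x - D xstar)‖ ≤ ‖v‖ + lam * ‖v‖ :=
            (norm_sub_le _ _).trans (by linarith)
          have := hgLip x xstar
          nlinarith
      _ = K * ‖v‖ := by rw [hK]; ring
  -- square bound
  have hsq : ‖v - γ • u‖ ^ 2 ≤ c * ‖v‖ ^ 2 := by
    have hexp : ‖v - γ • u‖ ^ 2 = ‖v‖ ^ 2 - 2 * γ * ⟪u, v⟫_ℝ + γ ^ 2 * ‖u‖ ^ 2 := by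
      rw [norm_sub_sq_real, norm_smul, inner_smul_right, Real.norm_eq_abs, abs_of_pos hγ0]
      rw [real_inner_comm]
      ring
    have hu2 : ‖u‖ ^ 2 ≤ K ^ 2 * ‖v‖ ^ 2 := by nlinarith [norm_nonneg u]
    rw [hexp, hc]
    nlinarith
  have hcnn : (0:ℝ) ≤ c := by
    have hK1 : τ * (1 - lam) ≤ K := by nlinarith
    have hK2 : (τ * (1 - lam)) ^ 2 ≤ K ^ 2 := by nlinarith
    have h4 : (1 - γ * τ * (1 - lam)) ^ 2 ≤ c := by
      rw [hc]; nlinarith [sq_nonneg γ]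
    nlinarith [sq_nonneg (1 - γ * τ * (1 - lam))]
  -- main contraction
  have hmain : ‖v - γ • u‖ ≤ η * ‖v‖ := by
    have h5 : ‖v - γ • u‖ ≤ Real.sqrt (c * ‖v‖ ^ 2) := by
      rw [← Real.sqrt_sq (norm_nonneg (v - γ • u))]
      exact Real.sqrt_le_sqrt hsq
    rw [Real.sqrt_mul hcnn, Real.sqrt_sq hvnn] at h5
    rwa [hη, hc]
  -- decomposition
  have hdecomp : x - γ • Gh x - xstar = (v - γ • u) + (γ * τ) • (Dh x - D x) := by
    rw [hu, hstar, hGh x, hG x, hvdef]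
    module
  calc ‖x - γ • Gh x - xstar‖ ≤ ‖v - γ • u‖ + ‖(γ * τ) • (Dh x - D x)‖ := by
        rw [hdecomp]; exact norm_add_le _ _
    _ ≤ η * ‖v‖ + (γ * τ) * (σ * ε) := by
        rw [norm_smul, Real.norm_eq_abs, abs_of_pos (mul_pos hγ0 hτ)]
        have := hmis x
        have : (γ * τ) * ‖Dh x - D x‖ ≤ (γ * τ) * (σ * ε) := by nlinarith [mul_pos hγ0 hτ]
        linarith
    _ = η * ‖x - xstar‖ + γ * τ * σ * ε := by rw [hvdef]; ring
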